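/- Correctness of the arity-generic selector construction: for all natural numbers n ≥ 1 and 1 ≤ k ≤ n, letting f = λpx.(p (λz.x)), the term obtained by applying K (k−1) times to the (n−k)-fold application of f to I, i.e., (c_{k−1} K ((c_{n−k} f) I)), is βη-equal to the selector σ_k^n = λx_1…x_n.x_k. -/

import Mathlib

namespace LC

/-- Untyped λ-terms, de Bruijn indices. -/
inductive Tm : Type
  | var : ℕ → Tm
  | app : Tm → Tm → Tm
  | lam : Tm → Tm
  deriving DecidableEq

namespace Tm

/-- Shift the free variables ≥ c up by one. -/
def lift (c : ℕ) : Tm → Tm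
  | var n => if n < c then var n else var (n + 1)
  | app a b => app (lift c a) (lift c b)
  | lam a => lam (lift (c + 1) a)

/-- Substitute `s` for the free variable `k`. -/
def subst (k : ℕ) (s : Tm) : Tm → Tm
  | var n => if n = k then s else if k < n then var (n - 1) else var n
  | app a b => app (subst k s a) (subst k s b)
  | lam a => lam (subst (k + 1) (lift 0 s) a)

/-- One-step βη-reduction (with congruence closure). -/
inductive Step : Tm → Tm → Prop
  | beta (a b : Tm) : Step (app (lam a) b) (subst 0 b a)
  | eta (a : Tm) : Step (lam (app (lift 0 a) (var 0))) a
  | appL {a a' : Tm} (b : Tm) : Step a a' → Step (app a b) (app a' b)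
  | appR (a : Tm) {b b' : Tm} : Step b b' → Step (app a b) (app a b')
  | lamCongr {a a' : Tm} : Step a a' → Step (lam a) (lam a')

/-- βη-equivalence: the equivalence relation generated by βη-reduction. -/
def BetaEta : Tm → Tm → Prop := Relation.EqvGen Step

/-- Multi-step βη-reduction: reflexive-transitive closure of βη-reduction. -/
def Reduces : Tm → Tm → Prop := Relation.ReflTransGen Step

/-- I = λx.x -/
def I : Tm := lam (var 0)
/-- K = λxy.x -/
def K : Tm := lam (lam (var 1))
/-- B = λxyz.(x (y z)) -/
def B : Tm := lam (lam (lam (app (var 2) (app (var 1) (var 0)))))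
/-- C = λxyz.(x z y) -/
def C : Tm := lam (lam (lam (app (app (var 2) (var 0)) (var 1))))
/-- S = λxyz.(x z (y z)) -/
def S : Tm := lam (lam (lam (app (app (var 2) (var 0)) (app (var 1) (var 0)))))

/-- body of the n-th Church numeral: s (s ⋯ (s z)⋯), n times. -/
def churchBody : ℕ → Tm
  | 0 => var 0
  | n + 1 => app (var 1) (churchBody n)

/-- The n-th Church numeral c_n = λsz.(s (s ⋯ (s z)⋯)). -/
def church (n : ℕ) : Tm := lam (lam (churchBody n))

/-- n nested λ-abstractions. -/
def lamN : ℕ → Tm → Tm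
  | 0, t => t
  | n + 1, t => lam (lamN n t)

/-- Shift all free variables up by n. -/
def liftN (n : ℕ) (t : Tm) : Tm := (lift 0)^[n] t

/-- t (var (a+k-1)) ⋯ (var (a+1)) (var a) : left-associated application of t
to k variables with descending indices. -/
def appVars (t : Tm) (a k : ℕ) : Tm :=
  ((List.range k).reverse).foldl (fun s i => app s (var (a + i))) t

/-- t (var a) (var (a+1)) ⋯ (var (a+k-1)) : left-associated application of t
to k variables with ascending indices. -/
def appVarsAsc (t : Tm) (a k : ℕ) : Tm :=
  (List.range k).foldl (fun s i => app s (var (a + i))) t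

/-- Left-associated application of t to a list of terms. -/
def appList (t : Tm) (l : List Tm) : Tm := l.foldl app t

/-- K_n = λp x_1…x_n. p -/
def Kn (n : ℕ) : Tm := lamN (n + 1) (var n)
/-- S_n = λpq x_1…x_n.(p x_1⋯x_n (q x_1⋯x_n)) -/
def Sn (n : ℕ) : Tm :=
  lamN (n + 2) (app (appVars (var (n + 1)) 0 n) (appVars (var n) 0 n))
/-- B_n = λpq x_1…x_n.(p (q x_1⋯x_n)) -/
def Bn (n : ℕ) : Tm := lamN (n + 2) (app (var (n + 1)) (appVars (var n) 0 n))
/-- C_n = λpq x_1…x_n.(p x_1⋯x_n q) -/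
def Cn (n : ℕ) : Tm := lamN (n + 2) (app (appVars (var (n + 1)) 0 n) (var n))


/-- The selector σ_k^n = λx_1…x_n.x_k. -/
def sel (k n : ℕ) : Tm := lamN n (var (n - k))

/-! ### Auxiliary lemmas for the selector construction -/

lemma lamN_succ_inner (n : ℕ) (t : Tm) : lamN n (lam t) = lamN (n + 1) t := by
  induction n with
  | zero => rfl
  | succ n ih => simp [lamN, ih]

lemma lift_lamN (c n : ℕ) (t : Tm) : lift c (lamN n t) = lamN n (lift (c + n) t) := by
  induction n generalizing c with
  | zero => rfl
  | succ n ih =>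
    simp only [lamN, lift, ih]
    rw [show c + 1 + n = c + (n + 1) by omega]

lemma liftN_succ (n : ℕ) (t : Tm) : liftN (n + 1) t = liftN n (lift 0 t) := by
  simp [liftN, Function.iterate_succ_apply]

lemma subst_lamN (k n : ℕ) (s t : Tm) :
    subst k s (lamN n t) = lamN n (subst (k + n) (liftN n s) t) := by
  induction n generalizing k s with
  | zero => simp [lamN, liftN]
  | succ n ih =>
    simp only [lamN, subst, ih, ← liftN_succ]
    rw [show k + 1 + n = k + (n + 1) by omega]

lemma subst_lift (k : ℕ) (s t : Tm) : subst k s (lift k t) = t := by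
  induction t generalizing k s with
  | var n =>
    by_cases h : n < k
    · simp [lift, subst, h, Nat.ne_of_lt h, Nat.not_lt.mpr (le_of_lt h)]
    · have h1 : ¬ n + 1 = k := by omega
      have h2 : k < n + 1 := by omega
      simp [lift, subst, h, h1, h2]
  | app a b iha ihb => simp [lift, subst, iha, ihb]
  | lam a ih => simp [lift, subst, ih]

lemma liftN_lam_var (j i : ℕ) (h : 1 ≤ i) : liftN j (lam (var i)) = lam (var (i + j)) := by
  induction j generalizing i with
  | zero => simp [liftN]
  | succ j ih =>
    rw [liftN_succ]
    have : lift 0 (lam (var i)) = lam (var (i + 1)) := by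
      simp [lift, Nat.not_lt.mpr h]
    rw [this, ih (i + 1) (by omega)]
    congr 2
    omega

/-- Iterated application: g (g ⋯ (g x)). -/
def iterApp (g x : Tm) : ℕ → Tm
  | 0 => x
  | m + 1 => app g (iterApp g x m)

lemma subst_churchBody (m : ℕ) (g x : Tm) :
    subst 0 x (subst 1 (lift 0 g) (churchBody m)) = iterApp g x m := by
  induction m with
  | zero => simp [churchBody, subst, iterApp]
  | succ m ih => simp [churchBody, subst, iterApp, ih, subst_lift]

lemma church_app (m : ℕ) (g x : Tm) :
    Reduces (app (app (church m) g) x) (iterApp g x m) := by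
  have s1 : Step (app (app (church m) g) x)
      (app (lam (subst 1 (lift 0 g) (churchBody m))) x) := by
    have h := Step.beta (lam (churchBody m)) g
    simpa [subst, church] using Step.appL x h
  have s2 : Step (app (lam (subst 1 (lift 0 g) (churchBody m))) x) (iterApp g x m) := by
    have h := Step.beta (subst 1 (lift 0 g) (churchBody m)) x
    rwa [subst_churchBody] at h
  exact (Relation.ReflTransGen.single s1).tail s2

lemma Reduces.appR' (a : Tm) {b b' : Tm} (h : Reduces b b') : Reduces (app a b) (app a b') :=
  Relation.ReflTransGen.lift (app a) (fun _ _ s => Step.appR a s) _ _ h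

lemma Reduces.lam' {a a' : Tm} (h : Reduces a a') : Reduces (lam a) (lam a') :=
  Relation.ReflTransGen.lift lam (fun _ _ s => Step.lamCongr s) _ _ h

lemma iterApp_congr (g : Tm) (j : ℕ) {x x' : Tm} (h : Reduces x x') :
    Reduces (iterApp g x j) (iterApp g x' j) := by
  induction j with
  | zero => exact h
  | succ j ih => exact Reduces.appR' g ih

lemma K_step (q m : ℕ) (h : m < q) :
    Step (app K (lamN q (var m))) (lamN (q + 1) (var m)) := by
  have hb := Step.beta (lam (var 1)) (lamN q (var m))
  have he : subst 0 (lamN q (var m)) (lam (var 1)) = lamN (q + 1) (var m) := by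
    simp only [subst, lift_lamN, lift]
    norm_num
    simp [lamN, h]
  rw [he] at hb
  exact hb

lemma iterK (j q m : ℕ) (h : m < q) :
    Reduces (iterApp K (lamN q (var m)) j) (lamN (q + j) (var m)) := by
  induction j with
  | zero => exact Relation.ReflTransGen.refl
  | succ j ih =>
    have h1 : Reduces (iterApp K (lamN q (var m)) (j + 1)) (app K (lamN (q + j) (var m))) :=
      Reduces.appR' K ih
    have h2 := K_step (q + j) m (by omega)
    have := h1.tail h2
    rwa [show q + j + 1 = q + (j + 1) by omega] at this

lemma f_step (j : ℕ) :
    Reduces (app (lam (lam (app (var 1) (lam (var 1))))) (lamN (j + 1) (var j)))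
      (lamN (j + 2) (var (j + 1))) := by
  have s1 : Step (app (lam (lam (app (var 1) (lam (var 1))))) (lamN (j + 1) (var j)))
      (lam (app (lamN (j + 1) (var j)) (lam (var 1)))) := by
    have hb := Step.beta (lam (app (var 1) (lam (var 1)))) (lamN (j + 1) (var j))
    have he : subst 0 (lamN (j + 1) (var j)) (lam (app (var 1) (lam (var 1))))
        = lam (app (lamN (j + 1) (var j)) (lam (var 1))) := by
      simp [subst, lift_lamN, lift]
    rwa [he] at hb
  have s2 : Step (lam (app (lamN (j + 1) (var j)) (lam (var 1))))
      (lamN (j + 2) (var (j + 1))) := by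
    have hl : lamN (j + 1) (var j) = lam (lamN j (var j)) := rfl
    have hb := Step.beta (lamN j (var j)) (lam (var 1))
    have he : subst 0 (lam (var 1)) (lamN j (var j)) = lamN j (lam (var (j + 1))) := by
      rw [subst_lamN, liftN_lam_var j 1 le_rfl,
        show (0:ℕ) + j = j by omega, show 1 + j = j + 1 by omega]
      simp [subst]
    rw [he] at hb
    have := Step.lamCongr hb
    rw [← hl] at this
    rwa [show lam (lamN j (lam (var (j + 1)))) = lamN (j + 2) (var (j + 1)) by
      rw [lamN_succ_inner]; simp [lamN]] at this
  exact (Relation.ReflTransGen.single s1).tail s2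

lemma iterF (p : ℕ) :
    Reduces (iterApp (lam (lam (app (var 1) (lam (var 1))))) I p) (lamN (p + 1) (var p)) := by
  induction p with
  | zero => exact Relation.ReflTransGen.refl
  | succ p ih =>
    have h1 := Reduces.appR' (lam (lam (app (var 1) (lam (var 1))))) ih
    exact h1.trans (f_step p)

lemma reduces_betaEta {a b : Tm} (h : Reduces a b) : BetaEta a b := by
  induction h with
  | refl => exact Relation.EqvGen.refl _
  | tail _ s ih => exact Relation.EqvGen.trans _ _ _ ih (Relation.EqvGen.rel _ _ s)

/-- with f = λpx.(p (λz.x)), for 1 ≤ k ≤ n,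
(c_{k-1} K ((c_{n-k} f) I)) =βη σ_k^n. -/
theorem selector_construction (n k : ℕ) (hk : 1 ≤ k) (hkn : k ≤ n) :
    BetaEta
      (app (app (church (k - 1)) K)
        (app (app (church (n - k)) (lam (lam (app (var 1) (lam (var 1)))))) I))
      (sel k n) := by
  obtain ⟨j, p, hkj, hnp⟩ : ∃ j p, k = j + 1 ∧ n = p + j + 1 := ⟨k - 1, n - k, by omega, by omega⟩
  subst hkj hnp
  rw [show j + 1 - 1 = j by omega, show p + j + 1 - (j + 1) = p by omega,
    show sel (j + 1) (p + j + 1) = lamN (p + j + 1) (var p) by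
      rw [sel, show p + j + 1 - (j + 1) = p by omega]]
  apply reduces_betaEta
  have hX : Reduces (app (app (church p) (lam (lam (app (var 1) (lam (var 1)))))) I)
      (lamN (p + 1) (var p)) :=
    (church_app p _ I).trans (iterF p)
  have hmain := (church_app j K _).trans ((iterApp_congr K j hX).trans
    (iterK j (p + 1) p (by omega)))
  rwa [show p + 1 + j = p + j + 1 by omega] at hmain

end Tm
end LC
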